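/- If C takes values μ_i with probabilities c_i and Z ~ N(0, β²I_d) is independent of C, then the mutual information between C and C+Z satisfies I(C; C+Z) ≥ −Σ_i c_i log(Σ_j c_j exp(−‖μ_i − μ_j‖²/(8β²))). -/

import Mathlib

open MeasureTheory Real

/-- The density of the Gaussian `N(μ, β²I_d)` on `ℝ^d`. -/
noncomputable def gaussPdf {d : ℕ} (β : ℝ) (μ t : EuclideanSpace ℝ (Fin d)) : ℝ :=
  (2 * π * β ^ 2) ^ (-(d : ℝ) / 2) * Real.exp (-‖t - μ‖ ^ 2 / (2 * β ^ 2))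

/-- Differential entropy `h(g) = −∫ g log g` of a density on `ℝ^d`. -/
noncomputable def diffEnt {d : ℕ} (g : EuclideanSpace ℝ (Fin d) → ℝ) : ℝ :=
  -∫ t, g t * Real.log (g t)

section Aux

variable {d : ℕ} {β : ℝ}


lemma oneDim_moment {b : ℝ} (hb : 0 < b) :
    ∫ x : ℝ, x ^ 2 * rexp (-b * x ^ 2) = √(π / b) / (2 * b) := by
  have h1 : ∫ x : ℝ, x ^ 2 * rexp (-b * x ^ 2)
      = 2 * ∫ x in Set.Ioi (0:ℝ), x ^ 2 * rexp (-b * x ^ 2) := by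
    rw [← integral_comp_abs (f := fun x => x ^ 2 * rexp (-b * x ^ 2))]
    congr 1 with x
    rw [sq_abs]
  have h2 : ∫ x in Set.Ioi (0:ℝ), x ^ 2 * rexp (-b * x ^ 2)
      = b ^ (-(2 + 1 : ℝ) / 2) * (1 / 2) * Real.Gamma ((2 + 1) / 2) := by
    rw [← integral_rpow_mul_exp_neg_mul_rpow two_pos (by norm_num : (-1:ℝ) < 2) hb]
    refine setIntegral_congr_fun measurableSet_Ioi (fun x hx => ?_)
    norm_num [Real.rpow_natCast x 2]
  have hG : Real.Gamma ((2 + 1) / 2) = √π / 2 := by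
    have : ((2 + 1 : ℝ)) / 2 = 1 / 2 + 1 := by norm_num
    rw [this, Real.Gamma_add_one (by norm_num), Real.Gamma_one_half_eq]
    ring
  rw [h1, h2, hG]
  rw [show (-(2 + 1 : ℝ) / 2) = (-(1/2:ℝ)) + (-1 : ℝ) by ring,
    Real.rpow_add hb, Real.rpow_neg_one, Real.rpow_neg (le_of_lt hb), ← Real.sqrt_eq_rpow,
    Real.sqrt_div' π (by positivity)]
  have hsb : √b ≠ 0 := by positivity
  field_simp
lemma oneDim_int_f {b : ℝ} (hb : 0 < b) (i j : Fin d) :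
    Integrable (fun y : ℝ => (if j = i then y ^ 2 else 1) * rexp (-b * y ^ 2)) := by
  by_cases h : j = i
  · simp only [h, if_pos rfl]
    have := integrable_rpow_mul_exp_neg_mul_sq hb (s := 2) (by norm_num)
    refine this.congr (Filter.Eventually.of_forall fun x => ?_)
    norm_num [Real.rpow_natCast x 2]
  · simp only [if_neg h, one_mul]
    exact integrable_exp_neg_mul_sq hb

lemma pi_moment {d : ℕ} {b : ℝ} (hb : 0 < b) :
    (∫ x : Fin d → ℝ, (∑ i, x i ^ 2) * rexp (-b * ∑ i, x i ^ 2)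
      = (d : ℝ) / (2 * b) * (π / b) ^ ((d : ℝ) / 2))
    ∧ Integrable (fun x : Fin d → ℝ => (∑ i, x i ^ 2) * rexp (-b * ∑ i, x i ^ 2)) := by
  have key : ∀ x : Fin d → ℝ, (∑ i, x i ^ 2) * rexp (-b * ∑ i, x i ^ 2)
      = ∑ i, ∏ j, (if j = i then x j ^ 2 else 1) * rexp (-b * x j ^ 2) := by
    intro x
    have hexp : rexp (-b * ∑ i, x i ^ 2) = ∏ j, rexp (-b * x j ^ 2) := by
      rw [show -b * ∑ i, x i ^ 2 = ∑ i, -b * x i ^ 2 by rw [Finset.mul_sum], Real.exp_sum]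
    rw [Finset.sum_mul]
    congr 1 with i
    rw [Finset.prod_mul_distrib, ← hexp]
    congr 1
    simp [Finset.prod_ite_eq']
  have hint : ∀ i : Fin d, Integrable
      (fun x : Fin d → ℝ => ∏ j, (if j = i then x j ^ 2 else 1) * rexp (-b * x j ^ 2)) := by
    intro i
    exact Integrable.fintype_prod (fun j => oneDim_int_f hb i j)
  constructor
  · simp_rw [key]
    rw [integral_finset_sum _ (fun i _ => hint i)]
    have : ∀ i : Fin d, ∫ x : Fin d → ℝ,
        ∏ j, (if j = i then x j ^ 2 else 1) * rexp (-b * x j ^ 2)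
        = (√(π / b) / (2 * b)) * √(π / b) ^ (d - 1) := by
      intro i
      rw [MeasureTheory.integral_fintype_prod_volume_eq_prod (ι := Fin d)
        (f := fun j (y : ℝ) => (if j = i then y ^ 2 else 1) * rexp (-b * y ^ 2))]
      have hval : ∀ j, (∫ y : ℝ, (if j = i then y ^ 2 else 1) * rexp (-b * y ^ 2))
          = if j = i then √(π / b) / (2 * b) else √(π / b) := by
        intro j
        by_cases h : j = i
        · simp only [h, if_pos rfl]; exact oneDim_moment hb
        · simp only [if_neg h, one_mul]
          rw [integral_gaussian]
      simp_rw [hval]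
      rw [← Finset.mul_prod_erase Finset.univ _ (Finset.mem_univ i), if_pos rfl]
      congr 1
      rw [Finset.prod_congr rfl (fun j hj => if_neg (Finset.mem_erase.mp hj).1),
        Finset.prod_const, Finset.card_erase_of_mem (Finset.mem_univ i), Finset.card_univ,
        Fintype.card_fin]
    simp_rw [this]
    rw [Finset.sum_const, Finset.card_univ, Fintype.card_fin, nsmul_eq_mul]
    rcases Nat.eq_zero_or_pos d with hd | hd
    · subst hd; simp
    · have hsq : √(π / b) ^ (d - 1) * √(π / b) ^ 1 = √(π / b) ^ d := by
        rw [← pow_add]; congr 1; omega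
      have hpow : √(π / b) ^ d = (π / b) ^ ((d : ℝ) / 2) := by
        rw [Real.sqrt_eq_rpow, ← Real.rpow_natCast ((π/b) ^ ((1:ℝ)/2)) d,
          ← Real.rpow_mul (by positivity)]
        congr 1; ring
      rw [← hpow, ← hsq]
      ring
  · simp_rw [key]
    exact integrable_finset_sum _ (fun i _ => hint i)
variable {d : ℕ}

lemma integrable_exp_norm {b : ℝ} (hb : 0 < b) (μ : EuclideanSpace ℝ (Fin d)) :
    Integrable (fun t : EuclideanSpace ℝ (Fin d) => rexp (-b * ‖t - μ‖ ^ 2)) := by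
  have h := (GaussianFourier.integrable_cexp_neg_mul_sq_norm_add (V := EuclideanSpace ℝ (Fin d))
    (b := (b : ℂ)) (by simpa using hb) 0 0).norm
  have h2 : Integrable (fun t : EuclideanSpace ℝ (Fin d) => rexp (-b * ‖t‖ ^ 2)) := by
    refine h.congr (Filter.Eventually.of_forall fun t => ?_)
    simp [Complex.norm_exp]
    norm_cast
    exact Or.inl rfl
  exact h2.comp_sub_right μ

lemma integral_exp_norm {b : ℝ} (hb : 0 < b) (μ : EuclideanSpace ℝ (Fin d)) :
    ∫ t : EuclideanSpace ℝ (Fin d), rexp (-b * ‖t - μ‖ ^ 2) = (π / b) ^ ((d : ℝ) / 2) := by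
  rw [integral_sub_right_eq_self (fun t => rexp (-b * ‖t‖ ^ 2)) μ]
  rw [GaussianFourier.integral_rexp_neg_mul_sq_norm hb]
  simp

lemma norm_equiv_symm (x : Fin d → ℝ) :
    ‖MeasurableEquiv.toLp 2 (Fin d → ℝ) x‖ ^ 2 = ∑ i, x i ^ 2 := by
  rw [EuclideanSpace.norm_eq, Real.sq_sqrt (Finset.sum_nonneg fun i _ => by positivity)]
  simp [sq_abs]

lemma integrable_sq_exp_norm {b : ℝ} (hb : 0 < b) (μ : EuclideanSpace ℝ (Fin d)) :
    Integrable (fun t : EuclideanSpace ℝ (Fin d) => ‖t - μ‖ ^ 2 * rexp (-b * ‖t - μ‖ ^ 2)) := by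
  have h2 : Integrable
      (fun t : EuclideanSpace ℝ (Fin d) => ‖t‖ ^ 2 * rexp (-b * ‖t‖ ^ 2)) := by
    have A := EuclideanSpace.volume_preserving_symm_measurableEquiv_toLp (Fin d)
    rw [← MeasurePreserving.integrable_comp_emb A.symm
      (MeasurableEquiv.measurableEmbedding _)]
    have := (pi_moment (d := d) hb).2
    refine this.congr (Filter.Eventually.of_forall fun x => ?_)
    simp only [Function.comp_def, MeasurableEquiv.symm_symm, norm_equiv_symm]
  exact h2.comp_sub_right μ

lemma integral_sq_exp_norm {b : ℝ} (hb : 0 < b) (μ : EuclideanSpace ℝ (Fin d)) :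
    ∫ t : EuclideanSpace ℝ (Fin d), ‖t - μ‖ ^ 2 * rexp (-b * ‖t - μ‖ ^ 2)
      = (d : ℝ) / (2 * b) * (π / b) ^ ((d : ℝ) / 2) := by
  rw [integral_sub_right_eq_self (fun t => ‖t‖ ^ 2 * rexp (-b * ‖t‖ ^ 2)) μ]
  have A := (EuclideanSpace.volume_preserving_symm_measurableEquiv_toLp (Fin d)).symm
  rw [← A.integral_comp (MeasurableEquiv.measurableEmbedding _)]
  rw [← (pi_moment (d := d) hb).1]
  congr 1 with x
  simp only [Function.comp_def, MeasurableEquiv.symm_symm, norm_equiv_symm]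
lemma gaussPdf_eq (hβ : 0 < β) (μ t : EuclideanSpace ℝ (Fin d)) :
    gaussPdf β μ t = (2 * π * β ^ 2) ^ (-(d : ℝ) / 2)
      * rexp (-(2 * β ^ 2)⁻¹ * ‖t - μ‖ ^ 2) := by
  unfold gaussPdf
  congr 2
  field_simp

lemma gaussPdf_pos (hβ : 0 < β) (μ t : EuclideanSpace ℝ (Fin d)) : 0 < gaussPdf β μ t := by
  unfold gaussPdf
  have h2 : (0:ℝ) < 2 * π * β ^ 2 := by positivity
  positivity

lemma integrable_gaussPdf (hβ : 0 < β) (μ : EuclideanSpace ℝ (Fin d)) :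
    Integrable (gaussPdf β μ) := by
  have hb : (0:ℝ) < (2 * β ^ 2)⁻¹ := by positivity
  have := (integrable_exp_norm hb μ).const_mul ((2 * π * β ^ 2) ^ (-(d : ℝ) / 2))
  exact this.congr (Filter.Eventually.of_forall fun t => (gaussPdf_eq hβ μ t).symm)

lemma base_eq (hβ : 0 < β) : π / (2 * β ^ 2)⁻¹ = 2 * π * β ^ 2 := by
  field_simp

lemma integral_gaussPdf (hβ : 0 < β) (μ : EuclideanSpace ℝ (Fin d)) :
    ∫ t, gaussPdf β μ t = 1 := by
  have hb : (0:ℝ) < (2 * β ^ 2)⁻¹ := by positivity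
  simp_rw [gaussPdf_eq hβ μ]
  rw [integral_const_mul, integral_exp_norm hb μ, base_eq hβ,
    ← Real.rpow_add (by positivity), neg_div]
  simp

lemma integrable_gaussPdf_mul_sq (hβ : 0 < β) (μ : EuclideanSpace ℝ (Fin d)) :
    Integrable (fun t => gaussPdf β μ t * ‖t - μ‖ ^ 2) := by
  have hb : (0:ℝ) < (2 * β ^ 2)⁻¹ := by positivity
  have := (integrable_sq_exp_norm hb μ).const_mul ((2 * π * β ^ 2) ^ (-(d : ℝ) / 2))
  refine this.congr (Filter.Eventually.of_forall fun t => ?_)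
  simp only []
  rw [gaussPdf_eq hβ μ]; ring

lemma integral_gaussPdf_mul_sq (hβ : 0 < β) (μ : EuclideanSpace ℝ (Fin d)) :
    ∫ t, gaussPdf β μ t * ‖t - μ‖ ^ 2 = d * β ^ 2 := by
  have hb : (0:ℝ) < (2 * β ^ 2)⁻¹ := by positivity
  have h1 : ∀ t, gaussPdf β μ t * ‖t - μ‖ ^ 2
      = (2 * π * β ^ 2) ^ (-(d : ℝ) / 2) * (‖t - μ‖ ^ 2 * rexp (-(2 * β ^ 2)⁻¹ * ‖t - μ‖ ^ 2)) := by
    intro t; rw [gaussPdf_eq hβ μ]; ring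
  simp_rw [h1]
  rw [integral_const_mul, integral_sq_exp_norm hb μ, base_eq hβ]
  have : ((2 * π * β ^ 2) ^ (-(d : ℝ) / 2) : ℝ) * ((d : ℝ) / (2 * (2 * β ^ 2)⁻¹)
      * (2 * π * β ^ 2) ^ ((d : ℝ) / 2))
      = ((d : ℝ) / (2 * (2 * β ^ 2)⁻¹)) *
        ((2 * π * β ^ 2) ^ (-(d : ℝ) / 2) * (2 * π * β ^ 2) ^ ((d : ℝ) / 2)) := by ring
  rw [this, ← Real.rpow_add (by positivity), neg_div]
  simp
  field_simp
lemma sqrt_gaussPdf (hβ : 0 < β) (μ t : EuclideanSpace ℝ (Fin d)) :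
    √(gaussPdf β μ t) = (2 * π * β ^ 2) ^ (-(d : ℝ) / 4)
      * rexp (-(4 * β ^ 2)⁻¹ * ‖t - μ‖ ^ 2) := by
  unfold gaussPdf
  have h2 : (0:ℝ) < 2 * π * β ^ 2 := by positivity
  have hs1 : √((2 * π * β ^ 2) ^ (-(d : ℝ) / 2)) = (2 * π * β ^ 2) ^ (-(d : ℝ) / 4) := by
    rw [Real.sqrt_eq_rpow, ← Real.rpow_mul h2.le]
    congr 1; ring
  have hs2 : √(rexp (-‖t - μ‖ ^ 2 / (2 * β ^ 2))) = rexp (-(4 * β ^ 2)⁻¹ * ‖t - μ‖ ^ 2) := by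
    have hx : rexp (-‖t - μ‖ ^ 2 / (2 * β ^ 2)) = rexp (-(4 * β ^ 2)⁻¹ * ‖t - μ‖ ^ 2) ^ 2 := by
      rw [← Real.exp_nat_mul]
      congr 1
      field_simp
      ring
    rw [hx, Real.sqrt_sq (Real.exp_pos _).le]
  rw [Real.sqrt_mul (by positivity), hs1, hs2]

lemma integrable_sqrt_gaussPdf (hβ : 0 < β) (μ : EuclideanSpace ℝ (Fin d)) :
    Integrable (fun t => √(gaussPdf β μ t)) := by
  have hb : (0:ℝ) < (4 * β ^ 2)⁻¹ := by positivity
  have := (integrable_exp_norm hb μ).const_mul ((2 * π * β ^ 2) ^ (-(d : ℝ) / 4))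
  exact this.congr (Filter.Eventually.of_forall fun t => (sqrt_gaussPdf hβ μ t).symm)

lemma norm_identity (a c t : EuclideanSpace ℝ (Fin d)) :
    ‖t - a‖ ^ 2 + ‖t - c‖ ^ 2
      = 2 * ‖t - (2:ℝ)⁻¹ • (a + c)‖ ^ 2 + 2⁻¹ * ‖a - c‖ ^ 2 := by
  have hpar := parallelogram_law_with_norm ℝ (t - a) (t - c)
  have h1 : (t - a) + (t - c) = (2:ℝ) • (t - (2:ℝ)⁻¹ • (a + c)) := by
    rw [smul_sub, two_smul, smul_inv_smul₀ (by norm_num : (2:ℝ) ≠ 0)]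
    abel
  have h2 : (t - a) - (t - c) = c - a := by abel
  rw [h1, h2, norm_smul, norm_sub_rev c a] at hpar
  simp only [Real.norm_ofNat, mul_pow] at hpar
  nlinarith [hpar]

lemma sqrt_gaussPdf_mul (hβ : 0 < β) (a c t : EuclideanSpace ℝ (Fin d)) :
    √(gaussPdf β a t) * √(gaussPdf β c t)
      = rexp (-‖a - c‖ ^ 2 / (8 * β ^ 2)) * gaussPdf β ((2:ℝ)⁻¹ • (a + c)) t := by
  rw [sqrt_gaussPdf hβ, sqrt_gaussPdf hβ]
  have h2 : (0:ℝ) < 2 * π * β ^ 2 := by positivity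
  have hK : ((2 * π * β ^ 2) ^ (-(d : ℝ) / 4) : ℝ) * (2 * π * β ^ 2) ^ (-(d : ℝ) / 4)
      = (2 * π * β ^ 2) ^ (-(d : ℝ) / 2) := by
    rw [← Real.rpow_add h2]; congr 1; ring
  have hexp : rexp (-(4 * β ^ 2)⁻¹ * ‖t - a‖ ^ 2) * rexp (-(4 * β ^ 2)⁻¹ * ‖t - c‖ ^ 2)
      = rexp (-‖a - c‖ ^ 2 / (8 * β ^ 2))
        * rexp (-‖t - (2:ℝ)⁻¹ • (a + c)‖ ^ 2 / (2 * β ^ 2)) := by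
    rw [← Real.exp_add, ← Real.exp_add]
    congr 1
    rw [show -(4*β^2)⁻¹*‖t-a‖^2 + -(4*β^2)⁻¹*‖t-c‖^2
        = -(4*β^2)⁻¹*(‖t-a‖^2+‖t-c‖^2) by ring, norm_identity a c t]
    have hβ2 : (β:ℝ)^2 ≠ 0 := by positivity
    field_simp
    ring
  unfold gaussPdf
  calc ((2 * π * β ^ 2) ^ (-(d : ℝ) / 4) * rexp (-(4 * β ^ 2)⁻¹ * ‖t - a‖ ^ 2))
        * ((2 * π * β ^ 2) ^ (-(d : ℝ) / 4) * rexp (-(4 * β ^ 2)⁻¹ * ‖t - c‖ ^ 2))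
      = ((2 * π * β ^ 2) ^ (-(d : ℝ) / 4) * (2 * π * β ^ 2) ^ (-(d : ℝ) / 4))
        * (rexp (-(4 * β ^ 2)⁻¹ * ‖t - a‖ ^ 2) * rexp (-(4 * β ^ 2)⁻¹ * ‖t - c‖ ^ 2)) := by ring
    _ = _ := by rw [hK, hexp]; ring

end Aux

section Aux2
variable {d : ℕ} {β : ℝ}

lemma sqrt_finset_sum_le {ι : Type*} (s : Finset ι) (f : ι → ℝ) (hf : ∀ i ∈ s, 0 ≤ f i) :
    √(∑ i ∈ s, f i) ≤ ∑ i ∈ s, √(f i) := by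
  induction s using Finset.cons_induction with
  | empty => simp
  | cons a s ha ih =>
    rw [Finset.sum_cons, Finset.sum_cons]
    have h1 : 0 ≤ f a := hf a (Finset.mem_cons_self a s)
    have h2 : ∀ i ∈ s, 0 ≤ f i := fun i hi => hf i (Finset.mem_cons_of_mem hi)
    have h3 : (0:ℝ) ≤ ∑ i ∈ s, f i := Finset.sum_nonneg h2
    refine le_trans (Real.sqrt_le_sqrt ?_) (by
      calc √(( √(f a) + √(∑ i ∈ s, f i)) ^ 2) = √(f a) + √(∑ i ∈ s, f i) := by
            rw [Real.sqrt_sq (by positivity)]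
        _ ≤ √(f a) + ∑ i ∈ s, √(f i) := by linarith [ih h2])
    rw [add_sq, Real.sq_sqrt h1, Real.sq_sqrt h3]
    nlinarith [Real.sqrt_nonneg (f a), Real.sqrt_nonneg (∑ i ∈ s, f i)]

lemma log_le_div_add {x a : ℝ} (hx : 0 < x) (ha : 0 < a) :
    Real.log x ≤ x / a - 1 + Real.log a := by
  have h := Real.log_le_sub_one_of_pos (show 0 < x / a by positivity)
  have : Real.log (x / a) = Real.log x - Real.log a := Real.log_div hx.ne' ha.ne'
  linarith

lemma neg_two_sqrt_le_mul_log {x : ℝ} (hx : 0 ≤ x) : -2 * √x ≤ x * Real.log x := by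
  rcases eq_or_lt_of_le hx with h | h
  · simp [← h]
  · have hs : 0 < √x := Real.sqrt_pos.mpr h
    have hlog : Real.log (1 / √x) ≤ 1 / √x := le_trans (Real.log_le_sub_one_of_pos
      (by positivity)) (by linarith)
    have hinv : Real.log (1 / √x) = -Real.log (√x) := by rw [one_div, Real.log_inv]
    have h1 : -(1 / √x) ≤ Real.log (√x) := by linarith
    have h2 : Real.log x = 2 * Real.log (√x) := by rw [Real.log_sqrt hx]; ring
    have h3 : x * (-(1 / √x)) = -√x := by
      rw [mul_neg, mul_one_div, Real.div_sqrt]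
    nlinarith [mul_le_mul_of_nonneg_left h1 hx]

lemma pointwise_key {n : ℕ} (c : Fin n → ℝ) (hc : ∀ i, 0 ≤ c i)
    (P : Fin n → ℝ) (hP : ∀ i, 0 < P i) (S : Fin n → ℝ) (hS : ∀ i, 0 < S i)
    (k : Fin n) (hk : 0 < c k) :
    (∑ i, c i * P i) * Real.log (∑ i, c i * P i) ≤
      (∑ i, c i * (P i * Real.log (P i) + (S i)⁻¹ * (√(P i) * (∑ j, c j * √(P j)))
        + Real.log (S i) * P i)) - (∑ i, c i * P i) := by
  set G : ℝ := ∑ i, c i * P i with hG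
  set Φ : ℝ := ∑ j, c j * √(P j) with hΦ
  have hGpos : 0 < G := by
    have h1 : c k * P k ≤ G := Finset.single_le_sum
      (fun i _ => mul_nonneg (hc i) (hP i).le) (Finset.mem_univ k)
    nlinarith [hP k]
  have hΦpos : 0 < Φ := by
    have h1 : c k * √(P k) ≤ Φ := Finset.single_le_sum
      (fun i _ => mul_nonneg (hc i) (Real.sqrt_nonneg _)) (Finset.mem_univ k)
    nlinarith [Real.sqrt_pos.mpr (hP k)]
  have hsplit : ∀ i, c i * (P i * Real.log G) ≤
      c i * (P i * Real.log (P i) + (S i)⁻¹ * (√(P i) * Φ)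
        + Real.log (S i) * P i + (√(P i) * (G / Φ) - 2 * P i)) := by
    intro i
    refine mul_le_mul_of_nonneg_left ?_ (hc i)
    have hPi := hP i
    have hsP : 0 < √(P i) := Real.sqrt_pos.mpr hPi
    have hPsq : √(P i) * √(P i) = P i := Real.mul_self_sqrt hPi.le
    have hne1 : √(P i) ≠ 0 := hsP.ne'
    have hne2 : S i ≠ 0 := (hS i).ne'
    have hne3 : Φ ≠ 0 := hΦpos.ne'
    have hne4 : G ≠ 0 := hGpos.ne'
    have hdiv : P i / √(P i) = √(P i) := Real.div_sqrt
    have hlog1 : Real.log G = Real.log (P i) + Real.log (Φ / √(P i))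
        + Real.log (G / (√(P i) * Φ)) := by
      rw [← Real.log_mul hPi.ne' (by positivity), ← Real.log_mul (by positivity) (by positivity)]
      congr 1
      rw [show P i * (Φ / √(P i)) * (G / (√(P i) * Φ))
          = (P i / √(P i) / √(P i)) * (Φ / Φ) * G by ring, hdiv, div_self hne1, div_self hne3]
      ring
    have h1 : Real.log (Φ / √(P i)) ≤ (Φ / √(P i)) / S i - 1 + Real.log (S i) :=
      log_le_div_add (by positivity) (hS i)
    have h2 : Real.log (G / (√(P i) * Φ)) ≤ G / (√(P i) * Φ) - 1 :=
      Real.log_le_sub_one_of_pos (by positivity)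
    have e1 : P i * ((Φ / √(P i)) / S i) = (S i)⁻¹ * (√(P i) * Φ) := by
      rw [show P i * ((Φ / √(P i)) / S i) = (S i)⁻¹ * ((P i / √(P i)) * Φ) by ring, hdiv]
    have e2 : P i * (G / (√(P i) * Φ)) = √(P i) * (G / Φ) := by
      rw [show P i * (G / (√(P i) * Φ)) = (P i / √(P i)) * (G / Φ) by ring, hdiv]
    calc P i * Real.log G
        = P i * Real.log (P i) + P i * Real.log (Φ / √(P i))
          + P i * Real.log (G / (√(P i) * Φ)) := by rw [hlog1]; ring
      _ ≤ P i * Real.log (P i) + P i * ((Φ / √(P i)) / S i - 1 + Real.log (S i))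
          + P i * (G / (√(P i) * Φ) - 1) := by
          have a1 := mul_le_mul_of_nonneg_left h1 hPi.le
          have a2 := mul_le_mul_of_nonneg_left h2 hPi.le
          linarith
      _ = P i * Real.log (P i) + (S i)⁻¹ * (√(P i) * Φ)
          + Real.log (S i) * P i + (√(P i) * (G / Φ) - 2 * P i) := by
          rw [mul_sub, mul_add, mul_sub, e1, e2]
          ring
  have hsum2 : ∑ i, c i * (√(P i) * (G / Φ)) = G := by
    have : ∑ i, c i * (√(P i) * (G / Φ)) = (∑ i, c i * √(P i)) * (G / Φ) := by
      rw [Finset.sum_mul]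
      congr 1 with i
      ring
    rw [this, ← hΦ]
    field_simp
  calc G * Real.log G = ∑ i, c i * (P i * Real.log G) := by
        rw [hG, Finset.sum_mul]
        congr 1 with i
        ring
    _ ≤ ∑ i, c i * (P i * Real.log (P i) + (S i)⁻¹ * (√(P i) * Φ)
          + Real.log (S i) * P i + (√(P i) * (G / Φ) - 2 * P i)) :=
        Finset.sum_le_sum (fun i _ => hsplit i)
    _ = (∑ i, c i * (P i * Real.log (P i) + (S i)⁻¹ * (√(P i) * Φ)
          + Real.log (S i) * P i)) - G := by
        have expand : ∀ i, c i * (P i * Real.log (P i) + (S i)⁻¹ * (√(P i) * Φ)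
            + Real.log (S i) * P i + (√(P i) * (G / Φ) - 2 * P i))
            = c i * (P i * Real.log (P i) + (S i)⁻¹ * (√(P i) * Φ) + Real.log (S i) * P i)
              + c i * (√(P i) * (G / Φ)) - 2 * (c i * P i) := by
          intro i; ring
        rw [Finset.sum_congr rfl (fun i _ => expand i)]
        rw [Finset.sum_sub_distrib, Finset.sum_add_distrib, hsum2, ← Finset.mul_sum, ← hG]
        ring
lemma continuous_gaussPdf {d : ℕ} (β : ℝ) (μ : EuclideanSpace ℝ (Fin d)) :
    Continuous (gaussPdf β μ) := by
  unfold gaussPdf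
  fun_prop

set_option maxHeartbeats 1000000 in
/-- Kolchinsky–Tracy lower bound: with `C` taking value `μ_i` w.p. `c_i` and
`Z ~ N(0, β²I_d)` independent, `I(C; C+Z) = h(g) − (d/2)log(2πeβ²)` satisfies
`I(C; C+Z) ≥ −Σ_i c_i log(Σ_j c_j exp(−‖μ_i − μ_j‖²/(8β²)))`. -/
theorem mutualInfo_ge_bhattacharyya {d n : ℕ} (β : ℝ) (hβ : 0 < β)
    (c : Fin n → ℝ) (hc : ∀ i, 0 ≤ c i) (hsum : ∑ i, c i = 1)
    (μ : Fin n → EuclideanSpace ℝ (Fin d)) :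
    diffEnt (fun t => ∑ i, c i * gaussPdf β (μ i) t) -
        (d : ℝ) / 2 * Real.log (2 * π * Real.exp 1 * β ^ 2) ≥
      -∑ i, c i * Real.log (∑ j, c j * Real.exp (-‖μ i - μ j‖ ^ 2 / (8 * β ^ 2))) := by
  classical
  obtain ⟨k, hk⟩ : ∃ k, 0 < c k := by
    by_contra h
    push_neg at h
    have : ∑ i, c i = 0 := Finset.sum_eq_zero fun i _ => le_antisymm (h i) (hc i)
    rw [hsum] at this; norm_num at this
  have hK : (0:ℝ) < 2 * π * β ^ 2 := by positivity
  set S : Fin n → ℝ := fun i => ∑ j, c j * rexp (-‖μ i - μ j‖ ^ 2 / (8 * β ^ 2)) with hS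
  have hSpos : ∀ i, 0 < S i := by
    intro i
    have h1 : c k * rexp (-‖μ i - μ k‖ ^ 2 / (8 * β ^ 2)) ≤ S i := Finset.single_le_sum
      (f := fun j => c j * rexp (-‖μ i - μ j‖ ^ 2 / (8 * β ^ 2)))
      (fun j _ => mul_nonneg (hc j) (Real.exp_pos _).le) (Finset.mem_univ k)
    have h2 : 0 < c k * rexp (-‖μ i - μ k‖ ^ 2 / (8 * β ^ 2)) :=
      mul_pos hk (Real.exp_pos _)
    linarith
  have hppos : ∀ i t, 0 < gaussPdf β (μ i) t := fun i t => gaussPdf_pos hβ (μ i) t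
  set g : EuclideanSpace ℝ (Fin d) → ℝ := fun t => ∑ i, c i * gaussPdf β (μ i) t with hg
  set φ : EuclideanSpace ℝ (Fin d) → ℝ := fun t => ∑ j, c j * √(gaussPdf β (μ j) t) with hφ
  have hgpos : ∀ t, 0 < g t := by
    intro t
    have h1 : c k * gaussPdf β (μ k) t ≤ g t := Finset.single_le_sum
      (fun i _ => mul_nonneg (hc i) (hppos i t).le) (Finset.mem_univ k)
    have h2 : 0 < c k * gaussPdf β (μ k) t := mul_pos hk (hppos k t)
    linarith
  -- logarithm of the gaussian density
  have logp : ∀ i t, Real.log (gaussPdf β (μ i) t)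
      = (-(d:ℝ) / 2) * Real.log (2 * π * β ^ 2) - (2 * β ^ 2)⁻¹ * ‖t - μ i‖ ^ 2 := by
    intro i t
    unfold gaussPdf
    rw [Real.log_mul (by positivity) (Real.exp_pos _).ne', Real.log_rpow hK, Real.log_exp]
    field_simp
    ring
  -- integrability of p log p and its integral
  have int_plogp : ∀ i, Integrable (fun t => gaussPdf β (μ i) t * Real.log (gaussPdf β (μ i) t)) := by
    intro i
    have h1 := (integrable_gaussPdf hβ (μ i)).const_mul ((-(d:ℝ)/2) * Real.log (2 * π * β ^ 2))
    have h2 := (integrable_gaussPdf_mul_sq hβ (μ i)).const_mul ((2 * β ^ 2)⁻¹)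
    refine (h1.sub h2).congr (Filter.Eventually.of_forall fun t => ?_)
    simp only [Pi.sub_apply]
    rw [logp i t]
    ring
  have I_plogp : ∀ i, ∫ t, gaussPdf β (μ i) t * Real.log (gaussPdf β (μ i) t)
      = (-(d:ℝ) / 2) * Real.log (2 * π * β ^ 2) - (d:ℝ) / 2 := by
    intro i
    have heq : ∀ t, gaussPdf β (μ i) t * Real.log (gaussPdf β (μ i) t)
        = ((-(d:ℝ)/2) * Real.log (2 * π * β ^ 2)) * gaussPdf β (μ i) t
          - (2 * β ^ 2)⁻¹ * (gaussPdf β (μ i) t * ‖t - μ i‖ ^ 2) := by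
      intro t; rw [logp i t]; ring
    simp_rw [heq]
    rw [integral_sub ((integrable_gaussPdf hβ (μ i)).const_mul _)
      ((integrable_gaussPdf_mul_sq hβ (μ i)).const_mul _),
      integral_const_mul, integral_const_mul, integral_gaussPdf hβ, integral_gaussPdf_mul_sq hβ]
    field_simp
  -- integrability and integral of √p i * φ
  have int_sqrtp_mul : ∀ i j, Integrable
      (fun t => √(gaussPdf β (μ i) t) * √(gaussPdf β (μ j) t)) := by
    intro i j
    have := (integrable_gaussPdf hβ ((2:ℝ)⁻¹ • (μ i + μ j))).const_mul
      (rexp (-‖μ i - μ j‖ ^ 2 / (8 * β ^ 2)))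
    exact this.congr (Filter.Eventually.of_forall fun t => (sqrt_gaussPdf_mul hβ _ _ t).symm)
  have int_sqrtpφ : ∀ i, Integrable (fun t => √(gaussPdf β (μ i) t) * φ t) := by
    intro i
    have : Integrable (fun t => ∑ j, c j * (√(gaussPdf β (μ i) t) * √(gaussPdf β (μ j) t))) :=
      integrable_finset_sum _ (fun j _ => (int_sqrtp_mul i j).const_mul (c j))
    refine this.congr (Filter.Eventually.of_forall fun t => ?_)
    simp only [hφ, Finset.mul_sum]
    congr 1 with j
    ring
  have I_sqrtpφ : ∀ i, ∫ t, √(gaussPdf β (μ i) t) * φ t = S i := by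
    intro i
    have heq : ∀ t, √(gaussPdf β (μ i) t) * φ t
        = ∑ j, (c j * rexp (-‖μ i - μ j‖ ^ 2 / (8 * β ^ 2)))
            * gaussPdf β ((2:ℝ)⁻¹ • (μ i + μ j)) t := by
      intro t
      simp only [hφ, Finset.mul_sum]
      congr 1 with j
      rw [show √(gaussPdf β (μ i) t) * (c j * √(gaussPdf β (μ j) t))
        = c j * (√(gaussPdf β (μ i) t) * √(gaussPdf β (μ j) t)) by ring, sqrt_gaussPdf_mul hβ]
      ring
    simp_rw [heq]
    rw [integral_finset_sum _ (fun j _ => ((integrable_gaussPdf hβ _).const_mul _))]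
    simp_rw [integral_const_mul, integral_gaussPdf hβ, mul_one]
    rfl
  have int_g : Integrable g :=
    integrable_finset_sum _ (fun i _ => (integrable_gaussPdf hβ (μ i)).const_mul (c i))
  have I_g : ∫ t, g t = 1 := by
    rw [hg, integral_finset_sum _ (fun i _ => (integrable_gaussPdf hβ (μ i)).const_mul (c i))]
    simp_rw [integral_const_mul, integral_gaussPdf hβ, mul_one, hsum]
  -- the dominating function U
  set U : EuclideanSpace ℝ (Fin d) → ℝ := fun t =>
    (∑ i, c i * (gaussPdf β (μ i) t * Real.log (gaussPdf β (μ i) t)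
      + (S i)⁻¹ * (√(gaussPdf β (μ i) t) * φ t)
      + Real.log (S i) * gaussPdf β (μ i) t)) - g t with hU
  have int_F : ∀ i, Integrable (fun t => c i * (gaussPdf β (μ i) t * Real.log (gaussPdf β (μ i) t)
      + (S i)⁻¹ * (√(gaussPdf β (μ i) t) * φ t)
      + Real.log (S i) * gaussPdf β (μ i) t)) := by
    intro i
    exact (((int_plogp i).add ((int_sqrtpφ i).const_mul _)).add
      ((integrable_gaussPdf hβ (μ i)).const_mul _)).const_mul (c i)
  have int_U : Integrable U := (integrable_finset_sum _ (fun i _ => int_F i)).sub int_g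
  have I_U : ∫ t, U t = (-(d:ℝ) / 2) * Real.log (2 * π * β ^ 2) - (d:ℝ) / 2
      + ∑ i, c i * Real.log (S i) := by
    rw [hU]
    rw [integral_sub (integrable_finset_sum _ (fun i _ => int_F i)) int_g,
      integral_finset_sum _ (fun i _ => int_F i), I_g]
    have hFi : ∀ i, ∫ t, c i * (gaussPdf β (μ i) t * Real.log (gaussPdf β (μ i) t)
        + (S i)⁻¹ * (√(gaussPdf β (μ i) t) * φ t)
        + Real.log (S i) * gaussPdf β (μ i) t)
        = c i * (((-(d:ℝ) / 2) * Real.log (2 * π * β ^ 2) - (d:ℝ) / 2)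
            + 1 + Real.log (S i)) := by
      intro i
      rw [integral_const_mul]
      congr 1
      have i1 : Integrable (fun t => gaussPdf β (μ i) t * Real.log (gaussPdf β (μ i) t))
        volume := int_plogp i
      have i2 : Integrable (fun t => (S i)⁻¹ * (√(gaussPdf β (μ i) t) * φ t)) volume :=
        (int_sqrtpφ i).const_mul _
      have i3 : Integrable (fun t => Real.log (S i) * gaussPdf β (μ i) t) volume :=
        (integrable_gaussPdf hβ (μ i)).const_mul _
      have i12 : Integrable (fun t => gaussPdf β (μ i) t * Real.log (gaussPdf β (μ i) t)
          + (S i)⁻¹ * (√(gaussPdf β (μ i) t) * φ t)) volume := i1.add i2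
      rw [integral_add i12 i3, integral_add i1 i2,
        I_plogp i, integral_const_mul, I_sqrtpφ i, integral_const_mul, integral_gaussPdf hβ]
      rw [inv_mul_cancel₀ (hSpos i).ne']
      ring
    rw [Finset.sum_congr rfl (fun i _ => hFi i)]
    have expand : ∀ i, c i * (((-(d:ℝ) / 2) * Real.log (2 * π * β ^ 2) - (d:ℝ) / 2)
        + 1 + Real.log (S i))
        = (((-(d:ℝ) / 2) * Real.log (2 * π * β ^ 2) - (d:ℝ) / 2) + 1) * c i
          + c i * Real.log (S i) := by intro i; ring
    rw [Finset.sum_congr rfl (fun i _ => expand i), Finset.sum_add_distrib, ← Finset.mul_sum,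
      hsum]
    ring
  -- pointwise bound
  have key : ∀ t, g t * Real.log (g t) ≤ U t := by
    intro t
    exact pointwise_key c hc (fun i => gaussPdf β (μ i) t) (fun i => hppos i t) S hSpos k hk
  -- integrability of g log g
  have cont_g : Continuous g := by
    apply continuous_finset_sum
    intro i _
    exact continuous_const.mul (continuous_gaussPdf β (μ i))
  have cont_glogg : Continuous (fun t => g t * Real.log (g t)) :=
    cont_g.mul (cont_g.log (fun t => (hgpos t).ne'))
  have int_sqrtg : Integrable (fun t => √(g t)) := by
    have hbd : Integrable (fun t => ∑ i, √(c i) * √(gaussPdf β (μ i) t)) :=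
      integrable_finset_sum _ (fun i _ => (integrable_sqrt_gaussPdf hβ (μ i)).const_mul _)
    refine hbd.mono' ((cont_g.sqrt).aestronglyMeasurable) ?_
    refine Filter.Eventually.of_forall fun t => ?_
    rw [Real.norm_eq_abs, abs_of_nonneg (Real.sqrt_nonneg _)]
    calc √(g t) ≤ ∑ i, √(c i * gaussPdf β (μ i) t) :=
          sqrt_finset_sum_le _ _ (fun i _ => mul_nonneg (hc i) (hppos i t).le)
      _ = ∑ i, √(c i) * √(gaussPdf β (μ i) t) := by
          congr 1 with i
          rw [Real.sqrt_mul (hc i)]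
  have int_glogg : Integrable (fun t => g t * Real.log (g t)) := by
    refine ((int_sqrtg.const_mul 2).add int_U.abs).mono'
      cont_glogg.aestronglyMeasurable (Filter.Eventually.of_forall fun t => ?_)
    simp only [Pi.add_apply]
    rw [Real.norm_eq_abs, abs_le]
    constructor
    · have h1 := neg_two_sqrt_le_mul_log (hgpos t).le
      have h2 : (0:ℝ) ≤ |U t| := abs_nonneg _
      nlinarith [Real.sqrt_nonneg (g t)]
    · have h1 := key t
      have h2 : U t ≤ |U t| := le_abs_self _
      have h3 : (0:ℝ) ≤ 2 * √(g t) := by positivity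
      nlinarith
  -- main comparison
  have hmono : ∫ t, g t * Real.log (g t) ≤ ∫ t, U t := integral_mono int_glogg int_U key
  rw [I_U] at hmono
  -- final arithmetic
  have hloge : Real.log (2 * π * Real.exp 1 * β ^ 2) = Real.log (2 * π * β ^ 2) + 1 := by
    rw [show (2 * π * Real.exp 1 * β ^ 2 : ℝ) = (2 * π * β ^ 2) * Real.exp 1 by ring,
      Real.log_mul hK.ne' (Real.exp_pos 1).ne', Real.log_exp]
  have hEnt : diffEnt (fun t => ∑ i, c i * gaussPdf β (μ i) t)
      = -∫ t, g t * Real.log (g t) := rfl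
  rw [hEnt, hloge, ge_iff_le, hS] at *
  linarith [hmono]
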